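/- Let A and B be implicative semilattices, f : A → B a homomorphism (preserving ∧ and →), F a filter of B, and G a filter of A. If f⁻¹[F] ⊆ G, then the filter of B generated by F ∪ f[G] is disjoint from f[A ∖ G]. -/

import Mathlib

/-- A filter of a meet-semilattice: a nonempty upset closed under binary meets. -/
def IsSLFilter {A : Type*} [SemilatticeInf A] (F : Set A) : Prop :=
  F.Nonempty ∧ (∀ a b : A, a ∈ F → a ≤ b → b ∈ F) ∧
    (∀ a b : A, a ∈ F → b ∈ F → a ⊓ b ∈ F)

/-- The filter generated by a set: all elements above a finite meet of
elements of the set. -/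
def filterGen {A : Type*} [SemilatticeInf A] (X : Set A) : Set A :=
  {b | ∃ s : Finset A, ∃ hs : s.Nonempty, ↑s ⊆ X ∧ s.inf' hs id ≤ b}

lemma stmt10_key {A B : Type*} [SemilatticeInf A] [SemilatticeInf B]
    (f : A → B) (hfinf : ∀ a b : A, f (a ⊓ b) = f a ⊓ f b)
    (F : Set B) (hF : IsSLFilter F) (G : Set A) (hG : IsSLFilter G)
    (s : Finset B) (hs : s.Nonempty) (hsub : ↑s ⊆ F ∪ f '' G) :
    ∃ x ∈ F, ∃ g ∈ G, x ⊓ f g ≤ s.inf' hs id := by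
  obtain ⟨x0, hx0⟩ := hF.1
  obtain ⟨g0, hg0⟩ := hG.1
  induction hs using Finset.Nonempty.cons_induction with
  | singleton u =>
    have hu : u ∈ F ∪ f '' G := hsub (by simp)
    rcases hu with hu | ⟨g, hg, rfl⟩
    · exact ⟨u, hu, g0, hg0, by simp⟩
    · exact ⟨x0, hx0, g, hg, by simp⟩
  | cons u t hut ht ih =>
    have hsub' : ↑t ⊆ F ∪ f '' G := fun z hz => hsub (by simp [hz])
    obtain ⟨x, hx, g, hg, hle⟩ := ih hsub'
    have hu : u ∈ F ∪ f '' G := hsub (by simp)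
    rw [Finset.inf'_cons ht]
    rcases hu with hu | ⟨g', hg', rfl⟩
    · refine ⟨u ⊓ x, hF.2.2 u x hu hx, g, hg, ?_⟩
      have : u ⊓ x ⊓ f g ≤ u ⊓ (x ⊓ f g) := by
        simp only [inf_assoc]; exact le_refl _
      exact this.trans (inf_le_inf_left u hle)
    · refine ⟨x, hx, g' ⊓ g, hG.2.2 g' g hg' hg, ?_⟩
      rw [hfinf]
      calc x ⊓ (f g' ⊓ f g) ≤ f g' ⊓ (x ⊓ f g) := by
            refine le_inf ?_ ?_
            · exact inf_le_right.trans inf_le_left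
            · exact inf_le_inf_left x inf_le_right
        _ ≤ f g' ⊓ t.inf' ht id := inf_le_inf_left _ hle

/-- Let `A`, `B` be implicative semilattices and `f : A → B` a
homomorphism (preserving `⊓` and `→`), `F` a filter of `B`, and `G` a filter
of `A`. If `f⁻¹[F] ⊆ G`, then the filter of `B` generated by `F ∪ f[G]` is
disjoint from `f[A ∖ G]`. -/
theorem stmt10 {A B : Type*} [SemilatticeInf A] [SemilatticeInf B]
    (himpA : A → A → A) (hresA : ∀ a b c : A, c ⊓ a ≤ b ↔ c ≤ himpA a b)
    (himpB : B → B → B) (hresB : ∀ a b c : B, c ⊓ a ≤ b ↔ c ≤ himpB a b)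
    (f : A → B)
    (hfinf : ∀ a b : A, f (a ⊓ b) = f a ⊓ f b)
    (hfimp : ∀ a b : A, f (himpA a b) = himpB (f a) (f b))
    (F : Set B) (hF : IsSLFilter F)
    (G : Set A) (hG : IsSLFilter G)
    (h1 : f ⁻¹' F ⊆ G) :
    Disjoint (filterGen (F ∪ f '' G)) (f '' Gᶜ) := by
  rw [Set.disjoint_left]
  rintro b ⟨s, hs, hsub, hle⟩ ⟨a, ha, rfl⟩
  obtain ⟨x, hx, g, hg, hle2⟩ := stmt10_key f hfinf F hF G hG s hs hsub
  have hxa : x ⊓ f g ≤ f a := hle2.trans hle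
  have hx2 : x ≤ himpB (f g) (f a) := (hresB (f g) (f a) x).mp hxa
  rw [← hfimp] at hx2
  have : himpA g a ∈ G := h1 (hF.2.1 x _ hx hx2)
  have hga : g ⊓ himpA g a ∈ G := hG.2.2 _ _ hg this
  have hle3 : g ⊓ himpA g a ≤ a := by
    rw [inf_comm]
    exact (hresA g a (himpA g a)).mpr le_rfl
  exact ha (hG.2.1 _ _ hga hle3)
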